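/- Let G be a finite group, g ∈ G, and p a prime number. Then there exists a p-quasielementary subgroup Q ≤ G such that the integer value (1_Q)^G(g) of the induced character of the trivial character of Q is not divisible by p. -/

import Mathlib

open scoped Classical

/-- A group `Q` is `p`-quasielementary if it has a normal cyclic subgroup `A` of order
prime to `p` such that `Q ⧸ A` is a `p`-group. -/
def IsPQuasiElementary (p : ℕ) (Q : Type*) [Group Q] : Prop :=
  ∃ A : Subgroup Q, ∃ hA : A.Normal,
    IsCyclic ↥A ∧ Nat.Coprime (Nat.card ↥A) p ∧
    @IsPGroup p (Q ⧸ A) (@QuotientGroup.Quotient.group Q _ A hA)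

/-- The class function on `G` induced from a function `φ` on a subgroup `H`:
`φ^G g = (1/|H|) ∑_{x ∈ G, x g x⁻¹ ∈ H} φ (x g x⁻¹)`. -/
noncomputable def indClassFun {G : Type*} [Group G] [Fintype G]
    (H : Subgroup G) (φ : ↥H → ℂ) : G → ℂ :=
  fun g => (Nat.card ↥H : ℂ)⁻¹ *
    ∑ x : G, if h : x * g * x⁻¹ ∈ H then φ ⟨x * g * x⁻¹, h⟩ else 0

lemma isPGroup_zpowers_of_pow_eq_one {p : ℕ} (hp : p.Prime) {G : Type*} [Group G]
    {x : G} {e : ℕ} (h : x ^ p ^ e = 1) : IsPGroup p (Subgroup.zpowers x) := by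
  obtain ⟨k, -, hk⟩ := (Nat.dvd_prime_pow hp).1 (orderOf_dvd_of_pow_eq_one h)
  exact IsPGroup.of_card ((Nat.card_zpowers x).trans hk)

lemma isCyclic_zpowers {G : Type*} [Group G] (z : G) : IsCyclic ↥(Subgroup.zpowers z) := by
  refine ⟨⟨⟨z, Subgroup.mem_zpowers z⟩, ?_⟩⟩
  rintro ⟨x, hx⟩
  obtain ⟨k, hk⟩ := hx
  exact ⟨k, by ext; simpa using hk⟩

/-- For every `g` in a finite group `G` and every prime `p`, there is a
`p`-quasielementary subgroup `Q ≤ G` such that the (integer) value at `g` of the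
character induced from the trivial character of `Q` is not divisible by `p`. -/
theorem exists_quasielementary_induced_value_not_dvd
    {G : Type*} [Group G] [Fintype G] (g : G) (p : ℕ) (hp : p.Prime) :
    ∃ Q : Subgroup G, IsPQuasiElementary p ↥Q ∧
      ∃ m : ℕ, indClassFun Q (fun _ => (1 : ℂ)) g = (m : ℂ) ∧ ¬ p ∣ m := by
  classical
  haveI hpf : Fact p.Prime := ⟨hp⟩
  set n := orderOf g with hn
  have hn0 : n ≠ 0 := (orderOf_pos g).ne'
  set e := n.factorization p with he
  set z := g ^ p ^ e with hzdef
  set m := orderOf z with hmdef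
  have hordz : m = ordCompl[p] n := by
    rw [hmdef, hzdef, orderOf_pow, Nat.gcd_eq_right (Nat.ordProj_dvd n p)]
  have hmp : Nat.Coprime m p := by
    rw [hordz]; exact (Nat.coprime_ordCompl hp hn0).symm
  have hzm : z ^ m = 1 := pow_orderOf_eq_one z
  have hcz : ∀ w ∈ Subgroup.zpowers z, Commute g w := by
    rintro w ⟨k, rfl⟩
    exact ((Commute.refl g).pow_right _).zpow_right k
  set Z := Subgroup.zpowers z with hZdef
  have hcardZ : Nat.card Z = m := Nat.card_zpowers z
  set N := Subgroup.normalizer (Z : Set G) with hNdef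
  have hgN : g ∈ N := by
    rw [hNdef, Subgroup.mem_normalizer_iff]
    intro w
    constructor
    · intro hw
      rw [(hcz w hw).eq, mul_inv_cancel_right]
      exact hw
    · intro hw
      have h1 : g * (g * w * g⁻¹) * g⁻¹ = g * w * g⁻¹ := by
        rw [(hcz _ hw).eq, mul_inv_cancel_right]
      have h2 : w = g * w * g⁻¹ := by
        conv_lhs => rw [show w = g⁻¹ * (g * w * g⁻¹) * g from by group, ← h1]
        group
      rw [h2]; exact hw
  set Z' := Z.subgroupOf N with hZ'def
  haveI hZ'norm : Z'.Normal := Subgroup.normal_in_normalizer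
  set gN : N := ⟨g, hgN⟩ with hgNdef
  have hzN : z ∈ N := Subgroup.le_normalizer (Subgroup.mem_zpowers z)
  set zN : N := ⟨z, hzN⟩ with hzNdef
  have hgNz : gN ^ p ^ e = zN := by
    ext; simp [hgNdef, hzNdef, hzdef]
  have hzNmemZ : zN ∈ Z' := Subgroup.mem_subgroupOf.2 (Subgroup.mem_zpowers z)
  set gbar : N ⧸ Z' := QuotientGroup.mk gN with hgbardef
  have hgbar : gbar ^ p ^ e = 1 := by
    rw [hgbardef, ← QuotientGroup.mk_pow, hgNz]
    exact (QuotientGroup.eq_one_iff zN).2 hzNmemZ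
  have hPG : IsPGroup p (Subgroup.zpowers gbar) := isPGroup_zpowers_of_pow_eq_one hp hgbar
  obtain ⟨P, hPle⟩ := hPG.exists_le_sylow
  set Q' := Subgroup.comap (QuotientGroup.mk' Z') (P : Subgroup (N ⧸ Z')) with hQ'def
  set Q := Q'.map N.subtype with hQdef
  have hQN : Q ≤ N := Subgroup.map_subtype_le Q'
  have hZ'Q' : Z' ≤ Q' := by
    intro x hx
    rw [hQ'def, Subgroup.mem_comap]
    have : QuotientGroup.mk' Z' x = 1 := (QuotientGroup.eq_one_iff x).2 hx
    rw [this]; exact one_mem _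
  have hgQ' : gN ∈ Q' := by
    rw [hQ'def, Subgroup.mem_comap]
    exact hPle (Subgroup.mem_zpowers gbar)
  have hgQ : g ∈ Q := ⟨gN, hgQ', rfl⟩
  have hmemQ : ∀ y : N, ((y : G) ∈ Q ↔ y ∈ Q') := by
    intro y
    constructor
    · rintro ⟨w, hw, hwy⟩
      rwa [show w = y from Subtype.ext hwy] at hw
    · intro h; exact ⟨y, h, rfl⟩
  have hZQ : Z ≤ Q := by
    intro x hx
    exact ⟨⟨x, Subgroup.le_normalizer hx⟩, hZ'Q' (Subgroup.mem_subgroupOf.2 hx), rfl⟩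
  set A := Z.subgroupOf Q with hAdef
  have hAcard : Nat.card A = m := by
    rw [hAdef, Nat.card_congr (Subgroup.subgroupOfEquivOfLe hZQ).toEquiv, hcardZ]
  have hAcyc : IsCyclic A := by
    haveI : IsCyclic ↥Z := isCyclic_zpowers z
    exact isCyclic_of_surjective _ (Subgroup.subgroupOfEquivOfLe hZQ).symm.surjective
  haveI hAnorm : A.Normal := by
    constructor
    intro a ha q
    rw [hAdef, Subgroup.mem_subgroupOf] at ha ⊢
    have hqN : (q : G) ∈ N := hQN q.2
    rw [hNdef, Subgroup.mem_normalizer_iff] at hqN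
    simpa using (hqN (a : G)).1 ha
  have hQuot : IsPGroup p (Q ⧸ A) := by
    intro q
    obtain ⟨x, rfl⟩ := QuotientGroup.mk_surjective q
    obtain ⟨y, hyQ', hyx⟩ := x.2
    have hyP : QuotientGroup.mk' Z' y ∈ (P : Subgroup (↥N ⧸ Z')) := hyQ'
    obtain ⟨k, hk⟩ := P.2 ⟨QuotientGroup.mk' Z' y, hyP⟩
    refine ⟨k, ?_⟩
    have h1 : y ^ p ^ k ∈ Z' := by
      rw [← QuotientGroup.eq_one_iff]
      have h2 := congrArg Subtype.val hk
      push_cast at h2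
      exact h2
    rw [← QuotientGroup.mk_pow, QuotientGroup.eq_one_iff, hAdef, Subgroup.mem_subgroupOf]
    have h3 : ((x ^ p ^ k : ↥Q) : G) = (y : G) ^ p ^ k := by
      push_cast [← hyx]; rfl
    rw [h3]
    exact Subgroup.mem_subgroupOf.1 h1
  have hfixG : ∀ (a x : G), a • (QuotientGroup.mk x : G ⧸ Q) = QuotientGroup.mk x ↔ x⁻¹ * a * x ∈ Q := by
    intro a x
    rw [MulAction.Quotient.smul_mk, QuotientGroup.eq,
      show (a • x)⁻¹ * x = (x⁻¹ * a * x)⁻¹ by rw [smul_eq_mul]; group]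
    exact inv_mem_iff
  have hkey : ∀ x : G, x⁻¹ * g * x ∈ Q → x ∈ N := by
    intro x hx
    have hconj : x⁻¹ * z * x = (x⁻¹ * g * x) ^ p ^ e := by
      rw [show x⁻¹ * g * x = x⁻¹ * g * x⁻¹⁻¹ by rw [inv_inv], conj_pow, inv_inv, ← hzdef]
    have hzx : x⁻¹ * z * x ∈ Q := by rw [hconj]; exact pow_mem hx _
    have hordzx : (x⁻¹ * z * x) ^ m = 1 := by
      rw [show x⁻¹ * z * x = x⁻¹ * z * x⁻¹⁻¹ by rw [inv_inv], conj_pow, hzm]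
      group
    have hzxZ : x⁻¹ * z * x ∈ Z := by
      set w : ↥Q := ⟨x⁻¹ * z * x, hzx⟩ with hwdef
      obtain ⟨k, hk⟩ := hQuot (QuotientGroup.mk w)
      have h1 : (QuotientGroup.mk w : Q ⧸ A) ^ m = 1 := by
        rw [← QuotientGroup.mk_pow, QuotientGroup.eq_one_iff, hAdef, Subgroup.mem_subgroupOf]
        have h2 : ((w ^ m : ↥Q) : G) = 1 := by push_cast [hwdef]; exact hordzx
        rw [h2]; exact one_mem Z
      have hd1 : orderOf (QuotientGroup.mk w : Q ⧸ A) ∣ m := orderOf_dvd_of_pow_eq_one h1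
      have hd2 : orderOf (QuotientGroup.mk w : Q ⧸ A) ∣ p ^ k := orderOf_dvd_of_pow_eq_one hk
      have hone : QuotientGroup.mk w = (1 : Q ⧸ A) := by
        rw [← orderOf_eq_one_iff, ← Nat.dvd_one, ← (hmp.pow_right k)]
        exact Nat.dvd_gcd hd1 hd2
      have hwA : w ∈ A := (QuotientGroup.eq_one_iff w).1 hone
      rw [hAdef] at hwA
      exact Subgroup.mem_subgroupOf.1 hwA
    have hmap : ∀ w ∈ Z, x⁻¹ * w * x ∈ Z := by
      rintro w ⟨k, rfl⟩
      rw [show x⁻¹ * z ^ k * x = (x⁻¹ * z * x) ^ k by rw [show x⁻¹ * z * x = x⁻¹ * z * x⁻¹⁻¹ by rw [inv_inv], conj_zpow, inv_inv]]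
      exact Subgroup.zpow_mem Z hzxZ k
    rw [hNdef, Subgroup.mem_normalizer_iff'']
    intro h
    constructor
    · exact hmap h
    · intro hh
      set f : ↥Z → ↥Z := fun w => ⟨x⁻¹ * (w : G) * x, hmap _ w.2⟩ with hfdef
      have hfinj : Function.Injective f := by
        intro a b hab
        have := congrArg Subtype.val hab
        simp only [hfdef] at this
        exact Subtype.ext (mul_left_cancel (mul_right_cancel this))
      have hfsurj : Function.Surjective f := Finite.surjective_of_injective hfinj
      obtain ⟨wz, hwz⟩ := hfsurj ⟨x⁻¹ * h * x, hh⟩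
      have := congrArg Subtype.val hwz
      simp only [hfdef] at this
      have hwh : (wz : G) = h := mul_left_cancel (mul_right_cancel this)
      rw [← hwh]; exact wz.2
  -- Bezout decomposition of g into p-part and p'-part
  have hcop2 : IsCoprime (m : ℤ) ((p : ℤ) ^ e) := by
    rw [Int.isCoprime_iff_gcd_eq_one]
    have h2 := (hmp.pow_right e)
    rw [show ((p : ℤ) ^ e) = ((p ^ e : ℕ) : ℤ) by push_cast; ring, Int.gcd_natCast_natCast]
    exact h2
  obtain ⟨u, v, huv⟩ := hcop2
  set t : ↥N := gN ^ (u * (m : ℤ)) with htdef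
  have hgNm : gN ^ (m * p ^ e) = 1 := by
    ext
    push_cast
    rw [show g ^ (m * p ^ e) = (g ^ p ^ e) ^ m by rw [← pow_mul, Nat.mul_comm], ← hzdef, hzm]
  have htp : t ^ p ^ e = 1 := by
    rw [htdef, ← zpow_natCast, ← zpow_mul,
      show u * (m : ℤ) * ((p ^ e : ℕ) : ℤ) = ((m * p ^ e : ℕ) : ℤ) * u by push_cast; ring,
      zpow_mul, zpow_natCast, hgNm, one_zpow]
  have hPt : IsPGroup p (Subgroup.zpowers t) := isPGroup_zpowers_of_pow_eq_one hp htp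
  have hgdecomp : gN = t * zN ^ v := by
    rw [htdef, ← hgNz, ← zpow_natCast gN, ← zpow_mul, ← zpow_add]
    rw [show u * (m : ℤ) + (p ^ e : ℕ) * v = ((m : ℤ) * u + (p : ℤ) ^ e * v : ℤ) by push_cast; ring]
    rw [show (m : ℤ) * u + (p : ℤ) ^ e * v = 1 by rw [← huv]; ring, zpow_one]
  have hiff : ∀ y : ↥N, (y⁻¹ * gN * y ∈ Q' ↔ y⁻¹ * t * y ∈ Q') := by
    intro y
    have hzmem : y⁻¹ * zN ^ v * y ∈ Q' := by
      apply hZ'Q'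
      have h4 := hZ'norm.conj_mem (zN ^ v) (Subgroup.zpow_mem Z' hzNmemZ v) y⁻¹
      rwa [inv_inv] at h4
    rw [hgdecomp, show y⁻¹ * (t * zN ^ v) * y = (y⁻¹ * t * y) * (y⁻¹ * zN ^ v * y) by group]
    exact mul_mem_cancel_right hzmem
  have hfixN : ∀ (a y : ↥N),
      a • (QuotientGroup.mk y : ↥N ⧸ Q') = QuotientGroup.mk y ↔ y⁻¹ * a * y ∈ Q' := by
    intro a y
    rw [MulAction.Quotient.smul_mk, QuotientGroup.eq,
      show (a • y)⁻¹ * y = (y⁻¹ * a * y)⁻¹ by rw [smul_eq_mul]; group]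
    exact inv_mem_iff
  have htg : ∀ c : ↥N ⧸ Q', (t • c = c ↔ gN • c = c) := by
    intro c
    refine QuotientGroup.induction_on c fun y => ?_
    rw [hfixN, hfixN, hiff]
  have hfp : MulAction.fixedPoints ↥(Subgroup.zpowers t) (↥N ⧸ Q') = {c | gN • c = c} := by
    ext c
    simp only [MulAction.mem_fixedPoints, Set.mem_setOf_eq]
    constructor
    · intro h
      rw [← htg]
      exact h ⟨t, Subgroup.mem_zpowers t⟩
    · intro h s
      have ht' : t ∈ MulAction.stabilizer ↥N c := by
        rw [MulAction.mem_stabilizer_iff]; exact (htg c).2 h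
      have hle := Subgroup.zpowers_le.2 ht'
      have hs := hle s.2
      rw [MulAction.mem_stabilizer_iff] at hs
      exact hs
  haveI : Finite (↥N ⧸ Z') := Quotient.finite _
  haveI : Finite (↥N ⧸ Q') := Quotient.finite _
  have hmodeq : Nat.card (↥N ⧸ Q') ≡
      Nat.card (MulAction.fixedPoints ↥(Subgroup.zpowers t) (↥N ⧸ Q')) [MOD p] :=
    hPt.card_modEq_card_fixedPoints _
  have hindex : ¬ p ∣ Q'.index := by
    have h1 : Q'.index = (P : Subgroup (↥N ⧸ Z')).index :=
      Subgroup.index_comap_of_surjective _ (QuotientGroup.mk'_surjective Z')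
    rw [h1]
    exact P.not_dvd_index
  have hnd : ¬ p ∣ Nat.card {c : ↥N ⧸ Q' | gN • c = c} := by
    rw [← hfp]
    intro hd
    rw [← Nat.ModEq.dvd_iff hmodeq dvd_rfl] at hd
    rw [show Nat.card (↥N ⧸ Q') = Q'.index from (Subgroup.index_eq_card Q').symm] at hd
    exact hindex hd
  -- transfer membership between Q and Q' for products
  have hmemQ' : ∀ (y w : ↥N), ((y : G)⁻¹ * g * (w : G) ∈ Q ↔ y⁻¹ * gN * w ∈ Q') := by
    intro y w
    rw [← hmemQ (y⁻¹ * gN * w)]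
    push_cast
    rfl
  let ι : ↥N ⧸ Q' → G ⧸ Q := Quotient.map' (fun y : ↥N => (y : G)) (by
    intro a b hab
    rw [QuotientGroup.leftRel_apply] at hab ⊢
    rw [← hmemQ] at hab
    push_cast at hab
    exact hab)
  have hι : ∀ y : ↥N, ι (QuotientGroup.mk y) = QuotientGroup.mk (y : G) := fun y => rfl
  have hprop : ∀ c : ↥N ⧸ Q', gN • c = c → g • ι c = ι c := by
    intro c
    refine QuotientGroup.induction_on c fun y => ?_
    intro h
    rw [hfixN] at h
    rw [hι, hfixG]
    exact (hmemQ' y y).2 h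
  have hinj : Function.Injective ι := by
    intro c1 c2
    refine QuotientGroup.induction_on c1 fun y1 => ?_
    refine QuotientGroup.induction_on c2 fun y2 => ?_
    intro h
    rw [hι, hι, QuotientGroup.eq] at h
    rw [QuotientGroup.eq, ← hmemQ]
    push_cast
    exact h
  have hsurj : ∀ c : G ⧸ Q, g • c = c → ∃ c' : ↥N ⧸ Q', gN • c' = c' ∧ ι c' = c := by
    intro c
    refine QuotientGroup.induction_on c fun x => ?_
    intro h
    rw [hfixG] at h
    have hxN : x ∈ N := hkey x h
    refine ⟨QuotientGroup.mk (⟨x, hxN⟩ : ↥N), ?_, hι _⟩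
    rw [hfixN]
    exact (hmemQ' ⟨x, hxN⟩ ⟨x, hxN⟩).1 h
  have hcardF : Nat.card {c : G ⧸ Q // g • c = c} = Nat.card {c : ↥N ⧸ Q' // gN • c = c} := by
    refine Nat.card_congr (Equiv.symm (Equiv.ofBijective
      (fun d : {c : ↥N ⧸ Q' // gN • c = c} =>
        (⟨ι d.1, hprop d.1 d.2⟩ : {c : G ⧸ Q // g • c = c}))
      ⟨fun d1 d2 hd => Subtype.ext (hinj (congrArg Subtype.val hd)), ?_⟩))
    rintro ⟨c, hc⟩
    obtain ⟨c', hc1, hc2⟩ := hsurj c hc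
    exact ⟨⟨c', hc1⟩, Subtype.ext hc2⟩
  have hndG : ¬ p ∣ Nat.card {c : G ⧸ Q // g • c = c} := by
    rw [hcardF]
    exact hnd
  set F : Finset (G ⧸ Q) := Finset.univ.filter (fun c => g • c = c) with hFdef
  have hFcard : F.card = Nat.card {c : G ⧸ Q // g • c = c} := by
    rw [Nat.card_eq_fintype_card, Fintype.card_subtype]
  have hfiber : ∀ c : G ⧸ Q,
      (Finset.univ.filter (fun x : G => (QuotientGroup.mk x : G ⧸ Q) = c)).card
        = Nat.card ↥Q := by
    intro c
    rw [← Fintype.card_subtype, Nat.card_eq_fintype_card]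
    obtain ⟨y, rfl⟩ := QuotientGroup.mk_surjective c
    refine Fintype.card_congr
      { toFun := fun x => ⟨y⁻¹ * x.1, QuotientGroup.eq.1 x.2.symm⟩
        invFun := fun q => ⟨y * q.1, QuotientGroup.eq.2 (by
          rw [show (y * (q : G))⁻¹ * y = (q : G)⁻¹ by group]
          exact inv_mem q.2)⟩
        left_inv := fun x => Subtype.ext (by simp)
        right_inv := fun q => Subtype.ext (by simp) }
  have hcount : (Finset.univ.filter
      (fun x : G => g • (QuotientGroup.mk x : G ⧸ Q) = QuotientGroup.mk x)).card
      = F.card * Nat.card ↥Q := by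
    rw [Finset.card_eq_sum_card_fiberwise
      (f := fun x : G => (QuotientGroup.mk x : G ⧸ Q)) (t := F)
      (fun x hx => by
        simp only [hFdef, Finset.mem_coe, Finset.mem_filter]
        exact ⟨Finset.mem_univ _, (Finset.mem_filter.1 (Finset.mem_coe.1 hx)).2⟩)]
    have hterm : ∀ c ∈ F, ((Finset.univ.filter
        (fun x : G => g • (QuotientGroup.mk x : G ⧸ Q) = QuotientGroup.mk x)).filter
        (fun x => (QuotientGroup.mk x : G ⧸ Q) = c)).card = Nat.card ↥Q := by
      intro c hc
      rw [hFdef, Finset.mem_filter] at hc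
      have heq : ((Finset.univ.filter
          (fun x : G => g • (QuotientGroup.mk x : G ⧸ Q) = QuotientGroup.mk x)).filter
          (fun x => (QuotientGroup.mk x : G ⧸ Q) = c))
          = Finset.univ.filter (fun x : G => (QuotientGroup.mk x : G ⧸ Q) = c) := by
        ext x
        simp only [Finset.mem_filter, Finset.mem_univ, true_and]
        constructor
        · rintro ⟨-, h⟩
          exact h
        · intro h
          exact ⟨by rw [h]; exact hc.2, h⟩
      rw [heq, hfiber]
    rw [Finset.sum_congr rfl hterm, Finset.sum_const, smul_eq_mul]
  have hQ0 : (Nat.card ↥Q : ℂ) ≠ 0 := Nat.cast_ne_zero.2 Nat.card_pos.ne'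
  have hsum : ∑ x : G, (if h : x * g * x⁻¹ ∈ Q then (1 : ℂ) else 0)
      = ((F.card * Nat.card ↥Q : ℕ) : ℂ) := by
    have h1 : ∀ x : G, (if h : x * g * x⁻¹ ∈ Q then (1 : ℂ) else 0)
        = (if g • (QuotientGroup.mk x⁻¹ : G ⧸ Q) = QuotientGroup.mk x⁻¹ then (1 : ℂ) else 0) := by
      intro x
      rw [dite_eq_ite]
      refine if_congr ?_ rfl rfl
      have h2 := hfixG g x⁻¹
      rw [inv_inv] at h2
      exact h2.symm
    calc ∑ x : G, (if h : x * g * x⁻¹ ∈ Q then (1 : ℂ) else 0)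
        = ∑ x : G, (if g • (QuotientGroup.mk x⁻¹ : G ⧸ Q) = QuotientGroup.mk x⁻¹
            then (1 : ℂ) else 0) := Finset.sum_congr rfl (fun x _ => h1 x)
      _ = ∑ x : G, (if g • (QuotientGroup.mk x : G ⧸ Q) = QuotientGroup.mk x
            then (1 : ℂ) else 0) := Fintype.sum_equiv (Equiv.inv G) _ _ (fun x => rfl)
      _ = ((Finset.univ.filter (fun x : G =>
            g • (QuotientGroup.mk x : G ⧸ Q) = QuotientGroup.mk x)).card : ℂ) :=
          Finset.sum_boole _ _
      _ = ((F.card * Nat.card ↥Q : ℕ) : ℂ) := by rw [hcount]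
  have hval : indClassFun Q (fun _ => (1 : ℂ)) g = ((F.card : ℕ) : ℂ) := by
    show (Nat.card ↥Q : ℂ)⁻¹ * _ = _
    rw [hsum]
    push_cast
    rw [mul_comm (F.card : ℂ) (Nat.card ↥Q : ℂ), ← mul_assoc, inv_mul_cancel₀ hQ0, one_mul]
  refine ⟨Q, ⟨A, hAnorm, hAcyc, by rw [hAcard]; exact hmp, hQuot⟩, F.card, hval, ?_⟩
  rw [hFcard]
  exact hndG
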